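/- For α = 1, the coefficient c₁ = (2 sin(θ₁/2)/(α₁² sin²θ₁ √N))·(cos θ₁ + 1/(2N − 1)) satisfies c₁ = 1 + o(1) as N → ∞, and for fixed α > 1 it satisfies c₁ = 1/√2 + o(1), where cos θ₁, θ₁ = arccos(cos θ₁), and α₁² = cos²θ₁ + 1/(N + N^α − 1) are as in the spectral analysis. -/

import Mathlib

open Filter Real Asymptotics

noncomputable def cosTheta1 (α N : ℝ) : ℝ :=
  ((N - 2) + Real.sqrt (N ^ 2 - 4 * N ^ α + 4 * N ^ (2 * α) / (N + N ^ α - 1)))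
    / (2 * (N - 1))

noncomputable def theta1 (α N : ℝ) : ℝ := Real.arccos (cosTheta1 α N)

noncomputable def alpha1Sq (α N : ℝ) : ℝ := (cosTheta1 α N) ^ 2 + 1 / (N + N ^ α - 1)

noncomputable def c1 (α N : ℝ) : ℝ :=
  2 * Real.sin (theta1 α N / 2) / (alpha1Sq α N * (Real.sin (theta1 α N)) ^ 2 * Real.sqrt N)
    * (cosTheta1 α N + 1 / (N + N ^ α - 1))


noncomputable def Mq (α N : ℝ) : ℝ := N + N ^ α - 1
noncomputable def Eq' (α N : ℝ) : ℝ := N ^ 2 - 4 * N ^ α + 4 * N ^ (2 * α) / (N + N ^ α - 1)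

lemma key (α : ℝ) (hα : 1 ≤ α) (L : ℝ) (hL0 : 0 < L)
    (hL : Tendsto (fun N : ℝ => N ^ α / (N + N ^ α - 1)) atTop (nhds L)) :
    Tendsto (fun N : ℝ => c1 α N) atTop (nhds (Real.sqrt 2 / (2 * Real.sqrt L))) := by
  -- basic eventual facts
  have hMge : ∀ᶠ N : ℝ in atTop, N ≤ Mq α N := by
    filter_upwards [eventually_ge_atTop (1:ℝ)] with N hN
    have h1 : N ^ (1:ℝ) ≤ N ^ α := Real.rpow_le_rpow_of_exponent_le hN hα
    rw [Real.rpow_one] at h1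
    unfold Mq; linarith
  have hMtop : Tendsto (fun N => Mq α N) atTop atTop :=
    tendsto_atTop_mono' atTop hMge tendsto_id
  have hMinv : Tendsto (fun N : ℝ => 1 / Mq α N) atTop (nhds 0) := by
    exact hMtop.inv_tendsto_atTop.congr fun N => (one_div (Mq α N)).symm
  have hMpos : ∀ᶠ N : ℝ in atTop, 0 < Mq α N := hMtop.eventually_gt_atTop 0
  have hN2 : ∀ᶠ N : ℝ in atTop, (2:ℝ) ≤ N := eventually_ge_atTop 2
  -- E identity
  have hEid : ∀ᶠ N : ℝ in atTop, Eq' α N = N ^ 2 - 4 * N ^ α * (N - 1) / Mq α N := by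
    filter_upwards [hN2, hMpos] with N hN hM
    have hN0 : (0:ℝ) < N := by linarith
    have h2 : N ^ (2*α) = N ^ α * N ^ α := by rw [two_mul, Real.rpow_add hN0]
    have hM' : Mq α N ≠ 0 := ne_of_gt hM
    unfold Eq' Mq at *
    rw [h2]; field_simp; ring
  -- E / N² → 1
  have hEdiv : Tendsto (fun N : ℝ => Eq' α N / N ^ 2) atTop (nhds 1) := by
    have ha : Tendsto (fun N : ℝ => 1 / N) atTop (nhds 0) := by
      simpa [one_div] using (tendsto_inv_atTop_zero : Tendsto (fun N : ℝ => N⁻¹) atTop (nhds 0))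
    have hb : Tendsto (fun N : ℝ => 1 / N ^ 2) atTop (nhds 0) := by
      have : Tendsto (fun N : ℝ => N ^ 2) atTop atTop := tendsto_pow_atTop (two_ne_zero)
      exact this.inv_tendsto_atTop.congr fun N => (one_div (N ^ 2)).symm
    have h0 : Tendsto (fun N : ℝ => 1 - 4 * (N ^ α / Mq α N) * (1 / N - 1 / N ^ 2))
        atTop (nhds (1 - 4 * L * (0 - 0))) :=
      tendsto_const_nhds.sub (((tendsto_const_nhds.mul hL).mul (ha.sub hb)))
    rw [show (1:ℝ) - 4 * L * (0 - 0) = 1 by ring] at h0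
    refine h0.congr' ?_
    filter_upwards [hN2, hMpos, hEid] with N hN hM hE
    have hN0 : (0:ℝ) < N := by linarith
    rw [hE]
    field_simp
  have hEpos : ∀ᶠ N : ℝ in atTop, 0 < Eq' α N := by
    have h1 : ∀ᶠ N : ℝ in atTop, 0 < Eq' α N / N ^ 2 :=
      hEdiv.eventually (eventually_gt_nhds one_pos)
    filter_upwards [h1, hN2] with N h hN
    have hN0 : (0:ℝ) < N ^ 2 := by positivity
    rcases div_pos_iff.mp h with ⟨h', _⟩ | ⟨_, h'⟩
    · exact h'
    · linarith
  -- √E / N → 1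
  have hsq : Tendsto (fun N : ℝ => Real.sqrt (Eq' α N) / N) atTop (nhds 1) := by
    have h0 : Tendsto (fun N : ℝ => Real.sqrt (Eq' α N / N ^ 2)) atTop (nhds 1) := by
      have := (Real.continuous_sqrt.tendsto 1).comp hEdiv
      rw [Real.sqrt_one] at this; exact this
    refine h0.congr' ?_
    filter_upwards [hN2, hEpos] with N hN hE
    rw [Real.sqrt_div hE.le, Real.sqrt_sq (by linarith : (0:ℝ) ≤ N)]
  -- N (1 - c) → L
  have hNc : Tendsto (fun N : ℝ => N * (1 - cosTheta1 α N)) atTop (nhds L) := by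
    have h0 : Tendsto (fun N : ℝ => 2 * (N ^ α / Mq α N) * (1 / (1 + Real.sqrt (Eq' α N) / N)))
        atTop (nhds (2 * L * (1 / (1 + 1)))) := by
      refine (tendsto_const_nhds.mul hL).mul ?_
      exact tendsto_const_nhds.div (tendsto_const_nhds.add hsq) (by norm_num)
    rw [show 2 * L * (1 / (1 + 1)) = L by ring] at h0
    refine h0.congr' ?_
    filter_upwards [hN2, hMpos, hEpos, hEid] with N hN hM hE hEi
    have hN0 : (0:ℝ) < N := by linarith
    set s := Real.sqrt (Eq' α N) with hs
    have hs0 : 0 < s := Real.sqrt_pos.mpr hE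
    have hs2 : s ^ 2 = Eq' α N := Real.sq_sqrt hE.le
    have hkey : (N - s) * (N + s) = 4 * N ^ α * (N - 1) / Mq α N := by
      have : (N - s) * (N + s) = N ^ 2 - s ^ 2 := by ring
      rw [this, hs2, hEi]; ring
    have hc : cosTheta1 α N = ((N - 2) + s) / (2 * (N - 1)) := by
      unfold cosTheta1; rw [hs]; rfl
    rw [hc]
    have hd1 : (2:ℝ) * (N - 1) ≠ 0 := by norm_num; intro h; linarith
    have hd2 : (1:ℝ) + s / N ≠ 0 := by positivity
    have hM' : Mq α N ≠ 0 := ne_of_gt hM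
    have hd3 : N - 1 ≠ 0 := by intro h; linarith
    field_simp at hkey ⊢
    linear_combination (-1) * hkey
  -- cos → 1
  have hcos : Tendsto (fun N : ℝ => cosTheta1 α N) atTop (nhds 1) := by
    have ha : Tendsto (fun N : ℝ => 1 / N) atTop (nhds 0) := by
      simpa [one_div] using (tendsto_inv_atTop_zero : Tendsto (fun N : ℝ => N⁻¹) atTop (nhds 0))
    have h0 : Tendsto (fun N : ℝ => 1 - (N * (1 - cosTheta1 α N)) * (1 / N))
        atTop (nhds (1 - L * 0)) := tendsto_const_nhds.sub (hNc.mul ha)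
    rw [show (1:ℝ) - L * 0 = 1 by ring] at h0
    refine h0.congr' ?_
    filter_upwards [hN2] with N hN
    have hN0 : N ≠ 0 := by intro h; rw [h] at hN; norm_num at hN
    field_simp
    ring
  have h1c : ∀ᶠ N : ℝ in atTop, 0 < 1 - cosTheta1 α N := by
    have h1 : ∀ᶠ N : ℝ in atTop, 0 < N * (1 - cosTheta1 α N) :=
      hNc.eventually (eventually_gt_nhds hL0)
    filter_upwards [h1, hN2] with N h hN
    by_contra hcon
    push_neg at hcon
    nlinarith
  have hcpos : ∀ᶠ N : ℝ in atTop, 0 < cosTheta1 α N :=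
    hcos.eventually (eventually_gt_nhds one_pos)
  -- alpha1Sq → 1
  have halpha : Tendsto (fun N : ℝ => alpha1Sq α N) atTop (nhds 1) := by
    have h0 : Tendsto (fun N : ℝ => (cosTheta1 α N) ^ 2 + 1 / Mq α N)
        atTop (nhds (1 ^ 2 + 0)) := (hcos.pow 2).add hMinv
    rw [show (1:ℝ) ^ 2 + 0 = 1 by ring] at h0
    exact h0.congr fun N => rfl
  have halppos : ∀ᶠ N : ℝ in atTop, 0 < alpha1Sq α N :=
    halpha.eventually (eventually_gt_nhds one_pos)
  -- limit of the simplified expression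
  have hsqNc : Tendsto (fun N : ℝ => Real.sqrt (N * (1 - cosTheta1 α N))) atTop
      (nhds (Real.sqrt L)) := (Real.continuous_sqrt.tendsto L).comp hNc
  have hden : Tendsto (fun N : ℝ => alpha1Sq α N * (1 + cosTheta1 α N)
      * Real.sqrt (N * (1 - cosTheta1 α N))) atTop (nhds (1 * (1 + 1) * Real.sqrt L)) :=
    (halpha.mul (tendsto_const_nhds.add hcos)).mul hsqNc
  have hnum : Tendsto (fun N : ℝ => Real.sqrt 2 * (cosTheta1 α N + 1 / Mq α N)) atTop
      (nhds (Real.sqrt 2 * (1 + 0))) := tendsto_const_nhds.mul (hcos.add hMinv)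
  have hdne : (1:ℝ) * (1 + 1) * Real.sqrt L ≠ 0 := by
    have : 0 < Real.sqrt L := Real.sqrt_pos.mpr hL0
    positivity
  have hg : Tendsto (fun N : ℝ => Real.sqrt 2 * (cosTheta1 α N + 1 / Mq α N)
      / (alpha1Sq α N * (1 + cosTheta1 α N) * Real.sqrt (N * (1 - cosTheta1 α N))))
      atTop (nhds (Real.sqrt 2 * (1 + 0) / (1 * (1 + 1) * Real.sqrt L))) :=
    hnum.div hden hdne
  rw [show Real.sqrt 2 * (1 + 0) / (1 * (1 + 1) * Real.sqrt L)
      = Real.sqrt 2 / (2 * Real.sqrt L) by ring] at hg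
  -- pointwise identity
  refine hg.congr' ?_
  filter_upwards [hN2, hcpos, h1c, halppos, hMpos] with N hN hc0 h1c0 hA hM
  have hN0 : (0:ℝ) < N := by linarith
  set c := cosTheta1 α N with hcdef
  have hc1 : c ≤ 1 := by linarith
  have hcm1 : (-1:ℝ) ≤ c := by linarith
  have hsin : Real.sin (theta1 α N) ^ 2 = 1 - c ^ 2 := by
    rw [theta1, Real.sin_arccos, Real.sq_sqrt (by nlinarith : (0:ℝ) ≤ 1 - c ^ 2)]
  have hsinh : Real.sin (theta1 α N / 2) = Real.sqrt ((1 - c) / 2) := by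
    rw [theta1, Real.sin_half_eq_sqrt (Real.arccos_nonneg _)
      (le_trans (Real.arccos_le_pi _) (by linarith [Real.pi_pos])),
      Real.cos_arccos hcm1 hc1]
  set s := Real.sqrt (1 - c) with hsdef
  have hs0 : 0 < s := Real.sqrt_pos.mpr h1c0
  have hs2 : s ^ 2 = 1 - c := Real.sq_sqrt h1c0.le
  have h12 : Real.sqrt ((1 - c) / 2) = s / Real.sqrt 2 := Real.sqrt_div h1c0.le 2
  have hNc' : Real.sqrt (N * (1 - c)) = Real.sqrt N * s := Real.sqrt_mul hN0.le _
  have h22 : Real.sqrt 2 * Real.sqrt 2 = 2 := Real.mul_self_sqrt (by norm_num)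
  have hsqN : (0:ℝ) < Real.sqrt N := Real.sqrt_pos.mpr hN0
  have hsq2 : (0:ℝ) < Real.sqrt 2 := Real.sqrt_pos.mpr (by norm_num)
  have h1cne : (1:ℝ) + c ≠ 0 := by linarith
  rw [eq_comm]
  rw [c1, hsinh, hsin, h12, hNc', ← hcdef]
  have : (1:ℝ) - c ^ 2 = s ^ 2 * (1 + c) := by rw [hs2]; ring
  rw [this]
  have hMdef : (N + N ^ α - 1) = Mq α N := rfl
  rw [hMdef]
  field_simp
  ring_nf
  rw [Real.sq_sqrt (by norm_num : (0:ℝ) ≤ 2)]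

theorem c1_limit_alpha_ge_one :
    (Tendsto (fun N : ℝ => c1 1 N) atTop (nhds 1)) ∧
    (∀ α : ℝ, 1 < α →
      Tendsto (fun N : ℝ => c1 α N) atTop (nhds (1 / Real.sqrt 2))) := by
  have h22 : Real.sqrt 2 * Real.sqrt 2 = 2 := Real.mul_self_sqrt (by norm_num)
  have hsq2 : (0:ℝ) < Real.sqrt 2 := Real.sqrt_pos.mpr (by norm_num)
  constructor
  · have hL : Tendsto (fun N : ℝ => N ^ (1:ℝ) / (N + N ^ (1:ℝ) - 1)) atTop (nhds (1/2)) := by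
      have ha : Tendsto (fun N : ℝ => 1 / N) atTop (nhds 0) := by
        simpa [one_div] using (tendsto_inv_atTop_zero : Tendsto (fun N : ℝ => N⁻¹) atTop (nhds 0))
      have h0 : Tendsto (fun N : ℝ => ((2:ℝ) - 1/N)⁻¹) atTop (nhds ((2 - 0)⁻¹)) :=
        (tendsto_const_nhds.sub ha).inv₀ (by norm_num)
      rw [show ((2:ℝ) - 0)⁻¹ = 1/2 by norm_num] at h0
      refine h0.congr' ?_
      filter_upwards [eventually_ge_atTop (1:ℝ)] with N hN
      have hN0 : (0:ℝ) < N := by linarith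
      rw [Real.rpow_one]
      rw [show N + N - 1 = 2*N - 1 by ring]
      rw [inv_eq_iff_eq_inv, eq_comm, inv_div]
      field_simp
    have h := key 1 le_rfl (1/2) (by norm_num) hL
    have hval : Real.sqrt 2 / (2 * Real.sqrt (1/2)) = 1 := by
      rw [one_div, Real.sqrt_inv]
      field_simp
      exact Real.sq_sqrt (by norm_num)
    rwa [hval] at h
  · intro α hα
    have hL : Tendsto (fun N : ℝ => N ^ α / (N + N ^ α - 1)) atTop (nhds 1) := by
      have ht1 : Tendsto (fun N : ℝ => N ^ (1 - α)) atTop (nhds 0) := by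
        have h := tendsto_rpow_neg_atTop (by linarith : (0:ℝ) < α - 1)
        exact h.congr fun N => by rw [neg_sub]
      have ht2 : Tendsto (fun N : ℝ => N ^ (-α)) atTop (nhds 0) :=
        tendsto_rpow_neg_atTop (by linarith)
      have h0 : Tendsto (fun N : ℝ => (N ^ (1-α) + 1 - N ^ (-α))⁻¹) atTop
          (nhds ((0 + 1 - 0)⁻¹)) :=
        ((ht1.add tendsto_const_nhds).sub ht2).inv₀ (by norm_num)
      rw [show ((0:ℝ) + 1 - 0)⁻¹ = 1 by norm_num] at h0
      refine h0.congr' ?_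
      filter_upwards [eventually_ge_atTop (1:ℝ)] with N hN
      have hN0 : (0:ℝ) < N := by linarith
      have hNa : (0:ℝ) < N ^ α := Real.rpow_pos_of_pos hN0 α
      have hNge : N ≤ N ^ α := by
        have h1 := Real.rpow_le_rpow_of_exponent_le hN hα.le
        rwa [Real.rpow_one] at h1
      have hM : (0:ℝ) < N + N ^ α - 1 := by linarith
      have e1 : N ^ (1 - α) = N * N ^ (-α) := by
        rw [sub_eq_add_neg, Real.rpow_add hN0, Real.rpow_one]
      have e2 : N ^ (-α) = (N ^ α)⁻¹ := Real.rpow_neg hN0.le α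
      rw [e1, e2, inv_eq_iff_eq_inv, eq_comm, inv_div]
      field_simp
    have h := key α hα.le 1 one_pos hL
    have hval : Real.sqrt 2 / (2 * Real.sqrt 1) = 1 / Real.sqrt 2 := by
      rw [Real.sqrt_one, mul_one, div_eq_div_iff (by norm_num) (by positivity), h22, one_mul]
    rwa [hval] at h
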